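/- Let r >= 5 and let M be the adjacency matrix of the multigraph C_{2,2,n} on the even subsets of {1,...,r} with weights M(S,T) = |S Δ T|/2 - 1 for S ≠ T. Then the eigenvalues of M are exactly 1 - 2^(r-3), 1, and 1 + (r-4)*2^(r-3), with multiplicities r, 2^(r-1) - (r+1), and 1 respectively. -/

import Mathlib

open Finset Module
open scoped symmDiff

namespace TypeDSpec

variable {r : ℕ}

noncomputable def chi (a S : Finset (Fin r)) : ℝ := (-1 : ℝ) ^ (a ∩ S).card

lemma card_symmDiff_add (X Y : Finset (Fin r)) :
    (X ∆ Y).card + 2 * (X ∩ Y).card = X.card + Y.card := by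
  have h1 : (X ∆ Y) ∪ (X ∩ Y) = X ∪ Y := by
    have := symmDiff_sup_inf (a := X) (b := Y); simpa using this
  have h2 : Disjoint (X ∆ Y) (X ∩ Y) := disjoint_symmDiff_inf X Y
  have h3 := Finset.card_union_of_disjoint h2
  rw [h1] at h3
  have h4 := Finset.card_union_add_card_inter X Y
  omega

lemma neg_one_pow_card_symmDiff (X Y : Finset (Fin r)) :
    (-1 : ℝ) ^ (X ∆ Y).card = (-1) ^ X.card * (-1) ^ Y.card := by
  have h : ((-1 : ℝ)) ^ ((X ∆ Y).card + 2 * (X ∩ Y).card) = (-1) ^ (X.card + Y.card) := by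
    rw [card_symmDiff_add]
  rw [pow_add, pow_add, pow_mul] at h
  simpa using h

lemma chi_symmDiff_right (a S T : Finset (Fin r)) :
    chi a (S ∆ T) = chi a S * chi a T := by
  have h : a ∩ (S ∆ T) = (a ∩ S) ∆ (a ∩ T) := by
    simpa using (inf_symmDiff_distrib_left a S T)
  unfold chi
  rw [h, neg_one_pow_card_symmDiff]

lemma chi_symmDiff_left (a b S : Finset (Fin r)) :
    chi (a ∆ b) S = chi a S * chi b S := by
  have h : (a ∆ b) ∩ S = (a ∩ S) ∆ (b ∩ S) := by
    simpa using (inf_symmDiff_distrib_right a b S)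
  unfold chi
  rw [h, neg_one_pow_card_symmDiff]

lemma chi_univ (S : Finset (Fin r)) : chi univ S = (-1 : ℝ) ^ S.card := by
  unfold chi; rw [Finset.univ_inter]

lemma chi_compl (a S : Finset (Fin r)) : chi a S * (-1 : ℝ) ^ S.card = chi aᶜ S := by
  rw [← chi_univ, ← chi_symmDiff_left]
  congr 1
  simpa [Finset.top_eq_univ] using (symmDiff_top a)

lemma sum_chi (a : Finset (Fin r)) :
    ∑ U : Finset (Fin r), chi a U = if a = ∅ then (2 : ℝ) ^ r else 0 := by
  classical
  have key : ∀ U : Finset (Fin r), chi a U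
      = ∏ i ∈ U, (if i ∈ a then (-1 : ℝ) else 1) := by
    intro U
    rw [Finset.prod_ite, Finset.prod_const, Finset.prod_const, one_pow, mul_one,
        Finset.filter_mem_eq_inter]
    unfold chi
    rw [Finset.inter_comm]
  have h1 : ∑ U : Finset (Fin r), chi a U
      = ∑ U ∈ (univ : Finset (Fin r)).powerset,
          (∏ i ∈ U, (if i ∈ a then (-1 : ℝ) else 1)) * ∏ i ∈ univ \ U, (1 : ℝ) := by
    rw [Finset.powerset_univ]
    exact Finset.sum_congr rfl fun U _ => by rw [key U, Finset.prod_const_one, mul_one]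
  rw [h1, ← Finset.prod_add]
  have h2 : ∀ i : Fin r, ((if i ∈ a then (-1 : ℝ) else 1) + 1)
      = if i ∈ a then 0 else 2 := by
    intro i; split <;> norm_num
  rw [Finset.prod_congr rfl fun i _ => h2 i]
  by_cases ha : a = ∅
  · simp [ha, Finset.card_univ]
  · obtain ⟨i, hi⟩ := Finset.nonempty_iff_ne_empty.mpr ha
    rw [if_neg ha]
    exact Finset.prod_eq_zero (Finset.mem_univ i) (by simp [hi])

lemma chi_singleton (j : Fin r) (U : Finset (Fin r)) :
    chi {j} U = if j ∈ U then -1 else 1 := by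
  unfold chi
  by_cases h : j ∈ U
  · rw [Finset.singleton_inter_of_mem h, if_pos h]; simp
  · rw [Finset.singleton_inter_of_notMem h, if_neg h]; simp

lemma sum_ite_singleton (a : Finset (Fin r)) (c : ℝ) :
    ∑ j : Fin r, (if a = {j} then c else 0) = if a.card = 1 then c else 0 := by
  by_cases h : a.card = 1
  · obtain ⟨j₀, rfl⟩ := Finset.card_eq_one.mp h
    rw [if_pos h]
    simp [Finset.singleton_inj, eq_comm]
  · rw [if_neg h]
    refine Finset.sum_eq_zero fun j _ => ?_
    rw [if_neg]
    intro hj; rw [hj] at h; simp at h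

lemma sum_card_chi (hr : 1 ≤ r) (a : Finset (Fin r)) :
    ∑ U : Finset (Fin r), (U.card : ℝ) * chi a U =
      2 ^ (r - 1) * ((if a = ∅ then (r : ℝ) else 0) - (if a.card = 1 then 1 else 0)) := by
  classical
  have step1 : ∀ U : Finset (Fin r), (U.card : ℝ) * chi a U
      = ∑ j : Fin r, (if j ∈ U then chi a U else 0) := by
    intro U
    rw [Finset.sum_ite_mem, Finset.univ_inter, Finset.sum_const, nsmul_eq_mul]
  rw [Finset.sum_congr rfl fun U _ => step1 U, Finset.sum_comm]
  have step2 : ∀ j : Fin r, ∀ U : Finset (Fin r),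
      (if j ∈ U then chi a U else 0) = (chi a U - chi (a ∆ {j}) U) / 2 := by
    intro j U
    rw [chi_symmDiff_left, chi_singleton]
    by_cases h : j ∈ U
    · rw [if_pos h, if_pos h]; ring
    · rw [if_neg h, if_neg h]; ring
  have step3 : ∀ j : Fin r,
      (∑ U : Finset (Fin r), (if j ∈ U then chi a U else 0))
        = ((if a = ∅ then (2:ℝ)^r else 0) - (if a = {j} then (2:ℝ)^r else 0)) / 2 := by
    intro j
    rw [Finset.sum_congr rfl fun U _ => step2 j U, ← Finset.sum_div,
      Finset.sum_sub_distrib, sum_chi, sum_chi]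
    congr 2
    have : a ∆ {j} = ∅ ↔ a = {j} := by
      rw [← Finset.bot_eq_empty, symmDiff_eq_bot]
    by_cases h : a = {j}
    · rw [if_pos (this.mpr h), if_pos h]
    · rw [if_neg (fun hh => h (this.mp hh)), if_neg h]
  rw [Finset.sum_congr rfl fun j _ => step3 j, ← Finset.sum_div, Finset.sum_sub_distrib,
    Finset.sum_const, sum_ite_singleton, Finset.card_univ, Fintype.card_fin, nsmul_eq_mul]
  have h2r : (2:ℝ) ^ r = 2 ^ (r - 1) * 2 := by
    rw [← pow_succ]; congr 1; omega
  by_cases ha : a = ∅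
  · have hc : ¬ a.card = 1 := by rw [ha]; simp
    rw [if_pos ha, if_pos ha, if_neg hc, if_neg hc, h2r]; ring
  · by_cases hc : a.card = 1
    · rw [if_neg ha, if_neg ha, if_pos hc, if_pos hc, h2r]; ring
    · rw [if_neg ha, if_neg ha, if_neg hc, if_neg hc]; ring

lemma sum_even_eq (f : Finset (Fin r) → ℝ) :
    ∑ U : {S : Finset (Fin r) // Even S.card}, f U.1
      = (∑ U : Finset (Fin r), f U + ∑ U : Finset (Fin r), (-1 : ℝ) ^ U.card * f U) / 2 := by
  classical
  have h1 : ∑ U ∈ univ.filter (fun S : Finset (Fin r) => Even S.card), f U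
      = ∑ U : {S : Finset (Fin r) // Even S.card}, f U.1 :=
    Finset.sum_subtype _ (by simp) f
  rw [← h1, Finset.sum_filter]
  have h2 : ∀ U : Finset (Fin r),
      (if Even U.card then f U else 0) = (f U + (-1 : ℝ) ^ U.card * f U) / 2 := by
    intro U
    by_cases h : Even U.card
    · rw [if_pos h, h.neg_one_pow]; ring
    · rw [if_neg h, (Nat.not_even_iff_odd.mp h).neg_one_pow]; ring
  rw [Finset.sum_congr rfl fun U _ => h2 U, ← Finset.sum_div, Finset.sum_add_distrib]

lemma empty_ne_univ (hr : 1 ≤ r) : ¬((∅ : Finset (Fin r)) = univ) := by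
  intro h
  have := congrArg Finset.card h
  rw [Finset.card_empty, Finset.card_univ, Fintype.card_fin] at this
  omega

lemma even_sum_chi (hr : 1 ≤ r) (a : Finset (Fin r)) :
    ∑ U : {S : Finset (Fin r) // Even S.card}, chi a U.1
      = if a = ∅ ∨ a = univ then (2 : ℝ) ^ (r - 1) else 0 := by
  rw [sum_even_eq]
  have h2 : ∀ U : Finset (Fin r), (-1 : ℝ) ^ U.card * chi a U = chi aᶜ U := by
    intro U; rw [mul_comm, chi_compl]
  rw [Finset.sum_congr rfl fun U _ => h2 U, sum_chi, sum_chi]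
  have hcompl : aᶜ = ∅ ↔ a = univ := Finset.compl_eq_empty_iff a
  have h2r : (2 : ℝ) ^ r = 2 ^ (r - 1) * 2 := by rw [← pow_succ]; congr 1; omega
  by_cases h1' : a = ∅
  · have h2' : ¬ aᶜ = ∅ := fun h => empty_ne_univ hr (h1' ▸ hcompl.mp h)
    rw [if_pos h1', if_neg h2', if_pos (Or.inl h1'), h2r]; ring
  · by_cases h2' : a = univ
    · rw [if_neg h1', if_pos (hcompl.mpr h2'), if_pos (Or.inr h2'), h2r]; ring
    · rw [if_neg h1', if_neg (fun h => h2' (hcompl.mp h)), if_neg (by tauto)]; ring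

lemma ite_combine (P1 P2 Q1 Q2 : Prop) [Decidable P1] [Decidable P2] [Decidable Q1]
    [Decidable Q2] (hP : ¬(P1 ∧ P2)) (hQ : ¬(Q1 ∧ Q2)) (x y : ℝ) :
    ((if P1 then x else 0) - (if Q1 then y else 0))
      + ((if P2 then x else 0) - (if Q2 then y else 0))
    = (if P1 ∨ P2 then x else 0) - (if Q1 ∨ Q2 then y else 0) := by
  by_cases p1 : P1 <;> by_cases p2 : P2 <;> by_cases q1 : Q1 <;> by_cases q2 : Q2 <;>
    simp_all <;> ring

lemma even_sum_card_chi (hr : 5 ≤ r) (a : Finset (Fin r)) :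
    ∑ U : {S : Finset (Fin r) // Even S.card}, (U.1.card : ℝ) * chi a U.1
      = 2 ^ (r - 2) * ((if a = ∅ ∨ a = univ then (r : ℝ) else 0)
          - (if a.card = 1 ∨ a.card = r - 1 then 1 else 0)) := by
  rw [sum_even_eq (fun U => (U.card : ℝ) * chi a U)]
  have h2 : ∀ U : Finset (Fin r), (-1 : ℝ) ^ U.card * ((U.card : ℝ) * chi a U)
      = (U.card : ℝ) * chi aᶜ U := by
    intro U; rw [← chi_compl]; ring
  rw [Finset.sum_congr rfl fun U _ => h2 U, sum_card_chi (by omega) a,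
    sum_card_chi (by omega) aᶜ]
  have hcompl : aᶜ = ∅ ↔ a = univ := Finset.compl_eq_empty_iff a
  have hcardc : aᶜ.card = 1 ↔ a.card = r - 1 := by
    rw [Finset.card_compl, Fintype.card_fin]
    have h := Finset.card_le_univ a
    rw [Fintype.card_fin] at h
    omega
  rw [if_congr hcompl rfl rfl, if_congr hcardc rfl rfl]
  have hP : ¬(a = ∅ ∧ a = univ) := fun ⟨h1, h2'⟩ => empty_ne_univ (by omega) (h1 ▸ h2')
  have hQ : ¬(a.card = 1 ∧ a.card = r - 1) := by omega
  rw [← mul_add, ite_combine _ _ _ _ hP hQ]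
  have h2r : (2 : ℝ) ^ (r - 1) = 2 ^ (r - 2) * 2 := by rw [← pow_succ]; congr 1; omega
  rw [h2r]; ring

lemma even_sum_chi_mul (hr : 1 ≤ r) (a b : Finset (Fin r)) :
    ∑ S : {S : Finset (Fin r) // Even S.card}, chi a S.1 * chi b S.1
      = if a ∆ b = ∅ ∨ a ∆ b = univ then (2 : ℝ) ^ (r - 1) else 0 := by
  have h : ∀ S : {S : Finset (Fin r) // Even S.card},
      chi a S.1 * chi b S.1 = chi (a ∆ b) S.1 := fun S => (chi_symmDiff_left a b S.1).symm
  rw [Finset.sum_congr rfl fun S _ => h S]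
  exact even_sum_chi hr _

noncomputable def eval3 (r : ℕ) (a : Finset (Fin r)) : ℝ :=
  if a = ∅ ∨ a = univ then 1 + ((r : ℝ) - 4) * 2 ^ (r - 3)
  else if a.card = 1 ∨ a.card = r - 1 then 1 - 2 ^ (r - 3) else 1

lemma mulVec_chi (hr : 5 ≤ r)
    (M : Matrix {S : Finset (Fin r) // Even S.card} {S : Finset (Fin r) // Even S.card} ℝ)
    (hM : ∀ S T, M S T = if S = T then 0 else ((symmDiff S.1 T.1).card : ℝ) / 2 - 1)
    (a : Finset (Fin r)) :
    M.mulVec (fun S => chi a S.1) = fun S => eval3 r a * chi a S.1 := by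
  funext S
  have hsplit : ∀ T, M S T
      = (((S.1 ∆ T.1).card : ℝ) / 2 - 1) + (if S = T then 1 else 0) := by
    intro T
    by_cases h : S = T
    · subst h; rw [hM, if_pos rfl, if_pos rfl]
      simp [symmDiff_self]
    · rw [hM, if_neg h, if_neg h, add_zero]
  have hexp : M.mulVec (fun S => chi a S.1) S
      = (∑ T : {S : Finset (Fin r) // Even S.card},
          (((S.1 ∆ T.1).card : ℝ) / 2 - 1) * chi a T.1) + chi a S.1 := by
    simp only [Matrix.mulVec, dotProduct]
    rw [Finset.sum_congr rfl fun T _ => by rw [hsplit T, add_mul]]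
    rw [Finset.sum_add_distrib]
    congr 1
    have : ∀ T : {S : Finset (Fin r) // Even S.card},
        (if S = T then (1 : ℝ) else 0) * chi a T.1
          = if S = T then chi a T.1 else 0 := by
      intro T; split <;> simp
    rw [Finset.sum_congr rfl fun T _ => this T, Finset.sum_ite_eq, if_pos (Finset.mem_univ S)]
  have hmemE : ∀ T : {S : Finset (Fin r) // Even S.card}, Even ((S.1 ∆ T.1).card) := by
    intro T
    have h := card_symmDiff_add S.1 T.1
    have h1 := S.2; have h2 := T.2
    rw [Nat.even_iff] at h1 h2 ⊢
    omega
  let e : {S : Finset (Fin r) // Even S.card} ≃ {S : Finset (Fin r) // Even S.card} :=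
    { toFun := fun T => ⟨S.1 ∆ T.1, hmemE T⟩
      invFun := fun T => ⟨S.1 ∆ T.1, hmemE T⟩
      left_inv := fun T => Subtype.ext (symmDiff_symmDiff_cancel_left S.1 T.1)
      right_inv := fun T => Subtype.ext (symmDiff_symmDiff_cancel_left S.1 T.1) }
  have hre : ∑ T : {S : Finset (Fin r) // Even S.card},
        (((S.1 ∆ T.1).card : ℝ) / 2 - 1) * chi a T.1
      = ∑ U : {S : Finset (Fin r) // Even S.card},
          (((U.1.card : ℝ)) / 2 - 1) * (chi a S.1 * chi a U.1) := by
    rw [← Equiv.sum_comp e (fun T : {S : Finset (Fin r) // Even S.card} =>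
      (((S.1 ∆ T.1).card : ℝ) / 2 - 1) * chi a T.1)]
    refine Finset.sum_congr rfl fun U _ => ?_
    show (((S.1 ∆ (S.1 ∆ U.1)).card : ℝ) / 2 - 1) * chi a (S.1 ∆ U.1) = _
    rw [symmDiff_symmDiff_cancel_left, chi_symmDiff_right]
  have hsplit2 : ∀ U : {S : Finset (Fin r) // Even S.card},
      ((U.1.card : ℝ) / 2 - 1) * (chi a S.1 * chi a U.1)
        = chi a S.1 * ((U.1.card : ℝ) * chi a U.1) / 2 - chi a S.1 * chi a U.1 := by
    intro U; ring
  rw [hexp, hre, Finset.sum_congr rfl fun U _ => hsplit2 U, Finset.sum_sub_distrib,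
    ← Finset.sum_div, ← Finset.mul_sum, ← Finset.mul_sum,
    even_sum_card_chi hr a, even_sum_chi (by omega) a]
  obtain ⟨s, rfl⟩ : ∃ s, r = s + 5 := ⟨r - 5, by omega⟩
  have e2 : s + 5 - 2 = s + 3 := by omega
  have e1 : s + 5 - 1 = s + 4 := by omega
  have e3 : s + 5 - 3 = s + 2 := by omega
  rw [e1, e2]
  by_cases hP : a = ∅ ∨ a = univ
  · have hQ : ¬(a.card = 1 ∨ a.card = s + 4) := by
      rcases hP with h | h
      · rw [h, Finset.card_empty]; omega
      · rw [h, Finset.card_univ, Fintype.card_fin]; omega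
    have hev : eval3 (s + 5) a = 1 + ((s + 5 : ℕ) - 4 : ℝ) * 2 ^ (s + 2) := by
      unfold eval3; rw [e3]; exact if_pos hP
    simp only [if_pos hP, if_neg hQ, hev]
    push_cast
    ring
  · by_cases hQ : a.card = 1 ∨ a.card = s + 4
    · have hev : eval3 (s + 5) a = 1 - 2 ^ (s + 2) := by
        unfold eval3; rw [e3, e1, if_neg hP]; exact if_pos hQ
      simp only [if_pos hQ, if_neg hP, hev]
      ring
    · have hev : eval3 (s + 5) a = 1 := by
        unfold eval3; rw [e1, if_neg hP]; exact if_neg hQ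
      simp only [if_neg hQ, if_neg hP, hev]
      ring

lemma two_pow_eq (r : ℕ) (hr : 1 ≤ r) : 2 ^ r = 2 ^ (r - 1) * 2 := by
  rw [← pow_succ]; congr 1; omega

lemma r_lt_pow (r : ℕ) (hr : 5 ≤ r) : r + 1 < 2 ^ (r - 1) := by
  obtain ⟨s, rfl⟩ : ∃ s, r = s + 5 := ⟨r - 5, by omega⟩
  have h : s < 2 ^ s := Nat.lt_two_pow_self
  have e : s + 5 - 1 = s + 4 := by omega
  rw [e]
  have e2 : 2 ^ (s + 4) = 16 * 2 ^ s := by ring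
  omega

lemma card_even_subsets (hr : 1 ≤ r) :
    Fintype.card {S : Finset (Fin r) // Even S.card} = 2 ^ (r - 1) := by
  classical
  haveI : NeZero r := ⟨by omega⟩
  rw [Fintype.card_subtype]
  have hflip : ∀ S : Finset (Fin r), (S ∆ {(0 : Fin r)}).card % 2 = (S.card + 1) % 2 := by
    intro S
    have h := card_symmDiff_add S {(0 : Fin r)}
    rw [Finset.card_singleton] at h
    omega
  have htot := Finset.card_filter_add_card_filter_not
    (s := (univ : Finset (Finset (Fin r)))) (p := fun S => Even S.card)
  rw [Finset.card_univ, Fintype.card_finset, Fintype.card_fin] at htot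
  have hAB : (univ.filter (fun S : Finset (Fin r) => Even S.card)).card
      = (univ.filter (fun S : Finset (Fin r) => ¬ Even S.card)).card := by
    refine Finset.card_nbij' (fun S => S ∆ {(0 : Fin r)}) (fun S => S ∆ {(0 : Fin r)})
      ?_ ?_ ?_ ?_
    · intro S hS
      simp only [Finset.mem_coe, Finset.mem_filter, Finset.mem_univ, true_and] at hS ⊢
      have := hflip S
      rw [Nat.even_iff] at hS ⊢
      omega
    · intro S hS
      simp only [Finset.mem_coe, Finset.mem_filter, Finset.mem_univ, true_and] at hS ⊢
      have := hflip S
      rw [Nat.even_iff] at hS ⊢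
      omega
    · intro S _
      exact symmDiff_symmDiff_cancel_right {(0 : Fin r)} S
    · intro S _
      exact symmDiff_symmDiff_cancel_right {(0 : Fin r)} S
  have h2 := two_pow_eq r hr
  omega

lemma card_D [NeZero r] (hr : 1 ≤ r) :
    (univ.filter (fun a : Finset (Fin r) => (0 : Fin r) ∉ a)).card = 2 ^ (r - 1) := by
  classical
  have htot := Finset.card_filter_add_card_filter_not
    (s := (univ : Finset (Finset (Fin r)))) (p := fun a => (0 : Fin r) ∉ a)
  rw [Finset.card_univ, Fintype.card_finset, Fintype.card_fin] at htot
  have hAB : (univ.filter (fun a : Finset (Fin r) => (0 : Fin r) ∉ a)).card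
      = (univ.filter (fun a : Finset (Fin r) => ¬ (0 : Fin r) ∉ a)).card := by
    refine Finset.card_nbij' (fun S => S ∆ {(0 : Fin r)}) (fun S => S ∆ {(0 : Fin r)})
      ?_ ?_ ?_ ?_
    · intro S hS
      simp only [Finset.mem_coe, Finset.mem_filter, Finset.mem_univ, true_and] at hS ⊢
      simp [Finset.mem_symmDiff, hS]
    · intro S hS
      simp only [Finset.mem_coe, Finset.mem_filter, Finset.mem_univ, true_and, not_not] at hS ⊢
      simp [Finset.mem_symmDiff, hS]
    · intro S _
      exact symmDiff_symmDiff_cancel_right {(0 : Fin r)} S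
    · intro S _
      exact symmDiff_symmDiff_cancel_right {(0 : Fin r)} S
  have h2 := two_pow_eq r hr
  omega

lemma card_C1 [NeZero r] (hr : 5 ≤ r) :
    ((univ.filter (fun a : Finset (Fin r) => (0 : Fin r) ∉ a)).filter
      (fun a => a.card = 1 ∨ a.card = r - 1)).card = r := by
  have hcompl_card : ({(0 : Fin r)}ᶜ : Finset (Fin r)).card = r - 1 := by
    rw [Finset.card_compl, Finset.card_singleton, Fintype.card_fin]
  have hset : (univ.filter (fun a : Finset (Fin r) => (0 : Fin r) ∉ a)).filter
      (fun a => a.card = 1 ∨ a.card = r - 1)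
      = insert ({(0 : Fin r)}ᶜ)
          ((univ.erase (0 : Fin r)).image (fun i => ({i} : Finset (Fin r)))) := by
    ext a
    simp only [Finset.mem_filter, Finset.mem_univ, true_and, Finset.mem_insert,
      Finset.mem_image, Finset.mem_erase]
    constructor
    · rintro ⟨h0, h1 | hr1⟩
      · obtain ⟨i, rfl⟩ := Finset.card_eq_one.mp h1
        right
        refine ⟨i, ⟨?_, trivial⟩, rfl⟩
        intro h; subst h; exact h0 (Finset.mem_singleton_self _)
      · left
        have hsub : a ⊆ {(0 : Fin r)}ᶜ := by
          intro x hx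
          simp only [Finset.mem_compl, Finset.mem_singleton]
          rintro rfl; exact h0 hx
        exact Finset.eq_of_subset_of_card_le hsub (by omega)
    · rintro (rfl | ⟨i, ⟨hi0, -⟩, rfl⟩)
      · refine ⟨?_, Or.inr hcompl_card⟩
        simp
      · refine ⟨?_, Or.inl (Finset.card_singleton i)⟩
        simp only [Finset.mem_singleton]
        exact fun h => hi0 h.symm
  rw [hset]
  have hnot : ({(0 : Fin r)}ᶜ : Finset (Fin r)) ∉
      (univ.erase (0 : Fin r)).image (fun i => ({i} : Finset (Fin r))) := by
    intro h
    obtain ⟨i, _, hi⟩ := Finset.mem_image.mp h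
    have := congrArg Finset.card hi
    rw [Finset.card_singleton] at this
    omega
  rw [Finset.card_insert_of_notMem hnot,
    Finset.card_image_of_injective _ Finset.singleton_injective,
    Finset.card_erase_of_mem (Finset.mem_univ _), Finset.card_univ, Fintype.card_fin]
  omega

lemma chi_linearIndependent [NeZero r] (hr : 1 ≤ r) (C : Finset (Finset (Fin r)))
    (hC : ∀ a ∈ C, (0 : Fin r) ∉ a) :
    LinearIndependent ℝ (fun a : C =>
      (fun S : {S : Finset (Fin r) // Even S.card} => chi a.1 S.1)) := by
  classical
  rw [Fintype.linearIndependent_iff]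
  intro g hg b
  have horth : ∀ a : C, ∑ S : {S : Finset (Fin r) // Even S.card}, chi a.1 S.1 * chi b.1 S.1
      = if a = b then (2 : ℝ) ^ (r - 1) else 0 := by
    intro a
    rw [even_sum_chi_mul hr]
    by_cases hab : a = b
    · rw [if_pos hab, if_pos]
      left
      rw [hab, ← Finset.bot_eq_empty, symmDiff_eq_bot]
    · rw [if_neg hab, if_neg]
      rintro (h | h)
      · rw [← Finset.bot_eq_empty, symmDiff_eq_bot] at h
        exact hab (Subtype.ext h)
      · have h0 : (0 : Fin r) ∈ (univ : Finset (Fin r)) := Finset.mem_univ _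
        rw [← h, Finset.mem_symmDiff] at h0
        rcases h0 with ⟨h1, _⟩ | ⟨h1, _⟩
        · exact hC a.1 a.2 h1
        · exact hC b.1 b.2 h1
  have hzero : ∑ S : {S : Finset (Fin r) // Even S.card},
      (∑ a : C, g a • chi a.1 S.1) * chi b.1 S.1 = 0 := by
    refine Finset.sum_eq_zero fun S _ => ?_
    have := congrFun hg S
    rw [Finset.sum_apply] at this
    simp only [Pi.smul_apply, smul_eq_mul] at this
    rw [show (∑ a : C, g a • chi a.1 S.1) = 0 from this, zero_mul]
  have hswap : ∑ S : {S : Finset (Fin r) // Even S.card},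
      (∑ a : C, g a • chi a.1 S.1) * chi b.1 S.1
      = ∑ a : C, g a * ∑ S : {S : Finset (Fin r) // Even S.card}, chi a.1 S.1 * chi b.1 S.1 := by
    calc ∑ S : {S : Finset (Fin r) // Even S.card}, (∑ a : C, g a • chi a.1 S.1) * chi b.1 S.1
        = ∑ S : {S : Finset (Fin r) // Even S.card},
            ∑ a : C, g a * (chi a.1 S.1 * chi b.1 S.1) := by
          refine Finset.sum_congr rfl fun S _ => ?_
          rw [Finset.sum_mul]
          refine Finset.sum_congr rfl fun a _ => ?_
          simp only [smul_eq_mul]; ring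
      _ = ∑ a : C, ∑ S : {S : Finset (Fin r) // Even S.card},
            g a * (chi a.1 S.1 * chi b.1 S.1) := Finset.sum_comm
      _ = ∑ a : C, g a * ∑ S : {S : Finset (Fin r) // Even S.card},
            chi a.1 S.1 * chi b.1 S.1 := by
          refine Finset.sum_congr rfl fun a _ => ?_
          rw [Finset.mul_sum]
  rw [hswap] at hzero
  rw [Finset.sum_congr rfl (fun a _ => by rw [horth a])] at hzero
  have hfin : ∑ a : C, g a * (if a = b then (2 : ℝ) ^ (r - 1) else 0)
      = g b * 2 ^ (r - 1) := by
    rw [Finset.sum_congr rfl (fun a _ => by rw [mul_ite, mul_zero]),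
      Finset.sum_ite_eq' univ b (fun a => g a * 2 ^ (r - 1)), if_pos (Finset.mem_univ b)]
  rw [hfin] at hzero
  have hp : ((2 : ℝ) ^ (r - 1)) ≠ 0 := by positivity
  exact (mul_eq_zero.mp hzero).resolve_right hp

lemma le_finrank_eigenspace [NeZero r] (hr : 1 ≤ r)
    (f : Module.End ℝ ({S : Finset (Fin r) // Even S.card} → ℝ))
    (μ : ℝ) (C : Finset (Finset (Fin r))) (hC : ∀ a ∈ C, (0 : Fin r) ∉ a)
    (hmem : ∀ a ∈ C, (fun S : {S : Finset (Fin r) // Even S.card} => chi a S.1)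
      ∈ Module.End.eigenspace f μ) :
    C.card ≤ finrank ℝ (Module.End.eigenspace f μ) := by
  classical
  have hli := chi_linearIndependent hr C hC
  let v : C → Module.End.eigenspace f μ :=
    fun a => ⟨fun S => chi a.1 S.1, hmem a.1 a.2⟩
  have hli2 : LinearIndependent ℝ v := by
    apply LinearIndependent.of_comp (Module.End.eigenspace f μ).subtype
    exact hli
  have := hli2.fintype_card_le_finrank
  simpa using this

end TypeDSpec

open Finset Module TypeDSpec in
open scoped symmDiff in
theorem typeD_spectrum (r : ℕ) (hr : 5 ≤ r)
    (M : Matrix {S : Finset (Fin r) // Even S.card} {S : Finset (Fin r) // Even S.card} ℝ)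
    (hM : ∀ S T, M S T = if S = T then 0 else ((symmDiff S.1 T.1).card : ℝ) / 2 - 1) :
    (∀ μ : ℝ, Module.End.HasEigenvalue (Matrix.toLin' M) μ ↔
        (μ = 1 - 2 ^ (r - 3) ∨ μ = 1 ∨ μ = 1 + ((r : ℝ) - 4) * 2 ^ (r - 3))) ∧
      Module.finrank ℝ (Module.End.eigenspace (Matrix.toLin' M) (1 - 2 ^ (r - 3))) = r ∧
      Module.finrank ℝ (Module.End.eigenspace (Matrix.toLin' M) 1) = 2 ^ (r - 1) - (r + 1) ∧
      Module.finrank ℝ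
          (Module.End.eigenspace (Matrix.toLin' M) (1 + ((r : ℝ) - 4) * 2 ^ (r - 3))) = 1 := by
  classical
  haveI : NeZero r := ⟨by omega⟩
  set f := Matrix.toLin' M with hf
  have hmemE : ∀ a : Finset (Fin r),
      (fun S : {S : Finset (Fin r) // Even S.card} => chi a S.1)
        ∈ Module.End.eigenspace f (eval3 r a) := by
    intro a
    rw [Module.End.mem_eigenspace_iff, hf, Matrix.toLin'_apply, mulVec_chi hr M hM a]
    rfl
  set D := univ.filter (fun a : Finset (Fin r) => (0 : Fin r) ∉ a) with hD
  set C1 := D.filter (fun a => a.card = 1 ∨ a.card = r - 1) with hC1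
  set C3 : Finset (Finset (Fin r)) := {∅} with hC3
  set C2 := D \ (C1 ∪ C3) with hC2
  have hD0 : ∀ a ∈ D, (0 : Fin r) ∉ a := by
    intro a ha; rw [hD, Finset.mem_filter] at ha; exact ha.2
  have hC1D : C1 ⊆ D := Finset.filter_subset _ _
  have hC3D : C3 ⊆ D := by
    intro a ha
    rw [hC3, Finset.mem_singleton] at ha
    subst ha
    rw [hD, Finset.mem_filter]
    exact ⟨Finset.mem_univ _, Finset.notMem_empty _⟩
  have hC2D : C2 ⊆ D := Finset.sdiff_subset
  have huniv_card : (univ : Finset (Fin r)).card = r := by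
    rw [Finset.card_univ, Fintype.card_fin]
  have hval1 : ∀ a ∈ C1, eval3 r a = 1 - 2 ^ (r - 3) := by
    intro a ha
    rw [hC1, Finset.mem_filter] at ha
    obtain ⟨haD, hQ⟩ := ha
    have hP : ¬(a = ∅ ∨ a = univ) := by
      rintro (rfl | rfl)
      · rw [Finset.card_empty] at hQ; omega
      · rw [huniv_card] at hQ; omega
    unfold eval3
    rw [if_neg hP, if_pos hQ]
  have hval3 : eval3 r ∅ = 1 + ((r : ℝ) - 4) * 2 ^ (r - 3) := by
    unfold eval3
    rw [if_pos (Or.inl rfl)]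
  have hval2 : ∀ a ∈ C2, eval3 r a = 1 := by
    intro a ha
    rw [hC2, Finset.mem_sdiff] at ha
    obtain ⟨haD, hnot⟩ := ha
    rw [Finset.mem_union, hC1, hC3, Finset.mem_filter, Finset.mem_singleton] at hnot
    push_neg at hnot
    obtain ⟨hnQ, hne⟩ := hnot
    have hQ : ¬(a.card = 1 ∨ a.card = r - 1) := by
      have h' := hnQ haD
      rintro (h | h)
      exacts [h'.1 h, h'.2 h]
    have hP : ¬(a = ∅ ∨ a = univ) := by
      rintro (rfl | rfl)
      · exact Finset.not_nonempty_empty hne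
      · exact hD0 _ haD (Finset.mem_univ _)
    unfold eval3
    rw [if_neg hP, if_neg hQ]
  have hcardD : D.card = 2 ^ (r - 1) := card_D (by omega)
  have hcardC1 : C1.card = r := card_C1 hr
  have hcardC3 : C3.card = 1 := Finset.card_singleton _
  have hdisj13 : Disjoint C1 C3 := by
    rw [hC3, Finset.disjoint_singleton_right]
    intro h
    rw [hC1, Finset.mem_filter] at h
    have := h.2
    rw [Finset.card_empty] at this
    omega
  have hsubD : C1 ∪ C3 ⊆ D := Finset.union_subset hC1D hC3D
  have hcardC2 : C2.card = 2 ^ (r - 1) - (r + 1) := by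
    rw [hC2, Finset.card_sdiff_of_subset hsubD, Finset.card_union_of_disjoint hdisj13,
      hcardD, hcardC1, hcardC3]
  -- lower bounds
  have hd1 : r ≤ finrank ℝ (Module.End.eigenspace f (1 - 2 ^ (r - 3) : ℝ)) := by
    have h := le_finrank_eigenspace (by omega) f (1 - 2 ^ (r - 3) : ℝ) C1
      (fun a ha => hD0 a (hC1D ha)) (fun a ha => hval1 a ha ▸ hmemE a)
    rwa [hcardC1] at h
  have hd3 : 1 ≤ finrank ℝ (Module.End.eigenspace f (1 + ((r : ℝ) - 4) * 2 ^ (r - 3))) := by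
    have h := le_finrank_eigenspace (by omega) f (1 + ((r : ℝ) - 4) * 2 ^ (r - 3)) C3
      (fun a ha => hD0 a (hC3D ha)) (fun a ha => by
        rw [hC3, Finset.mem_singleton] at ha
        subst ha
        exact hval3 ▸ hmemE ∅)
    rwa [hcardC3] at h
  have hd2 : 2 ^ (r - 1) - (r + 1) ≤ finrank ℝ (Module.End.eigenspace f (1 : ℝ)) := by
    have h := le_finrank_eigenspace (by omega) f (1 : ℝ) C2
      (fun a ha => hD0 a (hC2D ha)) (fun a ha => hval2 a ha ▸ hmemE a)
    rwa [hcardC2] at h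
  -- distinctness
  have hpow : (0 : ℝ) < 2 ^ (r - 3) := by positivity
  have hr4 : (1 : ℝ) ≤ (r : ℝ) - 4 := by
    have : (5 : ℝ) ≤ (r : ℝ) := by exact_mod_cast hr
    linarith
  have h12 : (1 - 2 ^ (r - 3) : ℝ) < 1 := by linarith
  have h23 : (1 : ℝ) < 1 + ((r : ℝ) - 4) * 2 ^ (r - 3) := by nlinarith
  have h13 : (1 - 2 ^ (r - 3) : ℝ) < 1 + ((r : ℝ) - 4) * 2 ^ (r - 3) := h12.trans h23
  -- independence
  have hind := Module.End.eigenspaces_iSupIndep f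
  have hle_iSup : ∀ μ ν : ℝ, ν ≠ μ →
      Module.End.eigenspace f ν ≤ ⨆ ν', ⨆ _ : ν' ≠ μ, Module.End.eigenspace f ν' := by
    intro μ ν hne
    exact le_iSup₂ (f := fun ν' (_ : ν' ≠ μ) => Module.End.eigenspace f ν') ν hne
  have hdisj12 : Disjoint (Module.End.eigenspace f (1 - 2 ^ (r - 3) : ℝ))
      (Module.End.eigenspace f (1 : ℝ)) :=
    hind.pairwiseDisjoint (by exact h12.ne)
  have hdisj123 : Disjoint
      (Module.End.eigenspace f (1 - 2 ^ (r - 3) : ℝ) ⊔ Module.End.eigenspace f (1 : ℝ))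
      (Module.End.eigenspace f (1 + ((r : ℝ) - 4) * 2 ^ (r - 3))) := by
    have h := hind (1 + ((r : ℝ) - 4) * 2 ^ (r - 3))
    refine (h.mono_right ?_).symm
    exact sup_le (hle_iSup _ _ h13.ne) (hle_iSup _ _ h23.ne)
  have hfr12 : finrank ℝ ↥(Module.End.eigenspace f (1 - 2 ^ (r - 3) : ℝ)
        ⊔ Module.End.eigenspace f (1 : ℝ))
      = finrank ℝ (Module.End.eigenspace f (1 - 2 ^ (r - 3) : ℝ))
        + finrank ℝ (Module.End.eigenspace f (1 : ℝ)) := by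
    have h := Submodule.finrank_sup_add_finrank_inf_eq
      (Module.End.eigenspace f (1 - 2 ^ (r - 3) : ℝ)) (Module.End.eigenspace f (1 : ℝ))
    rw [disjoint_iff.mp hdisj12, finrank_bot] at h
    omega
  have hfr123 : finrank ℝ ↥((Module.End.eigenspace f (1 - 2 ^ (r - 3) : ℝ)
          ⊔ Module.End.eigenspace f (1 : ℝ))
        ⊔ Module.End.eigenspace f (1 + ((r : ℝ) - 4) * 2 ^ (r - 3)))
      = finrank ℝ (Module.End.eigenspace f (1 - 2 ^ (r - 3) : ℝ))
        + finrank ℝ (Module.End.eigenspace f (1 : ℝ))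
        + finrank ℝ (Module.End.eigenspace f (1 + ((r : ℝ) - 4) * 2 ^ (r - 3))) := by
    have h := Submodule.finrank_sup_add_finrank_inf_eq
      (Module.End.eigenspace f (1 - 2 ^ (r - 3) : ℝ) ⊔ Module.End.eigenspace f (1 : ℝ))
      (Module.End.eigenspace f (1 + ((r : ℝ) - 4) * 2 ^ (r - 3)))
    rw [disjoint_iff.mp hdisj123, finrank_bot, hfr12] at h
    omega
  have hfrtot : finrank ℝ ({S : Finset (Fin r) // Even S.card} → ℝ) = 2 ^ (r - 1) := by
    rw [Module.finrank_fintype_fun_eq_card, card_even_subsets (by omega)]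
  have hle123 : finrank ℝ ↥((Module.End.eigenspace f (1 - 2 ^ (r - 3) : ℝ)
          ⊔ Module.End.eigenspace f (1 : ℝ))
        ⊔ Module.End.eigenspace f (1 + ((r : ℝ) - 4) * 2 ^ (r - 3))) ≤ 2 ^ (r - 1) := by
    rw [← hfrtot]
    exact Submodule.finrank_le _
  have hbig := r_lt_pow r hr
  have hd1' : finrank ℝ (Module.End.eigenspace f (1 - 2 ^ (r - 3) : ℝ)) = r := by omega
  have hd2' : finrank ℝ (Module.End.eigenspace f (1 : ℝ)) = 2 ^ (r - 1) - (r + 1) := by omega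
  have hd3' : finrank ℝ (Module.End.eigenspace f (1 + ((r : ℝ) - 4) * 2 ^ (r - 3))) = 1 := by
    omega
  refine ⟨?_, hd1', hd2', hd3'⟩
  intro μ
  constructor
  · intro hμ
    by_contra hcon
    push_neg at hcon
    obtain ⟨hne1, hne2, hne3⟩ := hcon
    have hμbot : Module.End.eigenspace f μ ≠ ⊥ := hμ
    have hμpos : 0 < finrank ℝ (Module.End.eigenspace f μ) := by
      rw [Module.finrank_pos_iff]
      exact Submodule.nontrivial_iff_ne_bot.mpr hμbot
    have hdisjμ : Disjoint ((Module.End.eigenspace f (1 - 2 ^ (r - 3) : ℝ)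
          ⊔ Module.End.eigenspace f (1 : ℝ))
        ⊔ Module.End.eigenspace f (1 + ((r : ℝ) - 4) * 2 ^ (r - 3)))
        (Module.End.eigenspace f μ) := by
      have h := hind μ
      refine (h.mono_right ?_).symm
      exact sup_le (sup_le (hle_iSup μ _ (Ne.symm hne1)) (hle_iSup μ _ (Ne.symm hne2))) (hle_iSup μ _ (Ne.symm hne3))
    have h := Submodule.finrank_sup_add_finrank_inf_eq
      ((Module.End.eigenspace f (1 - 2 ^ (r - 3) : ℝ) ⊔ Module.End.eigenspace f (1 : ℝ))
        ⊔ Module.End.eigenspace f (1 + ((r : ℝ) - 4) * 2 ^ (r - 3)))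
      (Module.End.eigenspace f μ)
    rw [disjoint_iff.mp hdisjμ, finrank_bot, hfr123] at h
    have hle4 : finrank ℝ ↥(((Module.End.eigenspace f (1 - 2 ^ (r - 3) : ℝ)
          ⊔ Module.End.eigenspace f (1 : ℝ))
        ⊔ Module.End.eigenspace f (1 + ((r : ℝ) - 4) * 2 ^ (r - 3)))
        ⊔ Module.End.eigenspace f μ) ≤ 2 ^ (r - 1) := by
      rw [← hfrtot]
      exact Submodule.finrank_le _
    omega
  · intro hμ
    have key : ∀ ν : ℝ, 0 < finrank ℝ (Module.End.eigenspace f ν) →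
        Module.End.HasEigenvalue f ν := by
      intro ν hpos
      rw [Module.End.hasEigenvalue_iff]
      intro hbot
      rw [hbot, finrank_bot] at hpos
      omega
    rcases hμ with rfl | rfl | rfl
    · exact key _ (by omega)
    · exact key _ (by omega)
    · exact key _ (by omega)
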